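/- Under the same setup (v ~ N(p₀, σv²), u ~ N(0, σu²), ε ~ N(0, σε²) independent, x = β(v − p₀), p = p₀ + λ(x + u + ε), with β = √(σu² + σε²)/σv and λ = σv/(2√(σu² + σε²))), the noise traders' expected P&L satisfies E[(v − p)·u] = −σv·σu²/(2√(σu² + σε²)). -/

import Mathlib

open MeasureTheory ProbabilityTheory

section KyleAux

open Real Set

lemma aemeasurable_of_map_eq_gaussian {Ω : Type*} [MeasurableSpace Ω] {P : Measure Ω}
    {f : Ω → ℝ} {μ : ℝ} {w : NNReal} (h : P.map f = gaussianReal μ w) :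
    AEMeasurable f P := by
  by_contra hf
  rw [Measure.map_of_not_aemeasurable hf] at h
  have h1 : (0 : Measure ℝ) Set.univ = 1 := by rw [h]; exact measure_univ
  simp at h1

lemma gauss_pdf_integral (μ : ℝ) {w : NNReal} (hw : w ≠ 0) (f : ℝ → ℝ) :
    ∫ x, f x ∂(gaussianReal μ w) = ∫ x, gaussianPDFReal μ w x * f x := by
  rw [gaussianReal_of_var_ne_zero μ hw, gaussianPDF_def]
  rw [show (fun x => ENNReal.ofReal (gaussianPDFReal μ w x))
      = fun x => ((Real.toNNReal (gaussianPDFReal μ w x) : NNReal) : ENNReal) from rfl]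
  rw [integral_withDensity_eq_integral_smul₀
    ((measurable_gaussianPDFReal μ w).real_toNNReal.aemeasurable) f]
  congr 1; ext x
  simp [NNReal.smul_def, Real.coe_toNNReal _ (gaussianPDFReal_nonneg μ w x)]

lemma gauss_pdf_integrable (μ : ℝ) {w : NNReal} (hw : w ≠ 0) (f : ℝ → ℝ) :
    Integrable f (gaussianReal μ w) ↔
      Integrable (fun x => gaussianPDFReal μ w x * f x) := by
  rw [gaussianReal_of_var_ne_zero μ hw, gaussianPDF_def]
  rw [show (fun x => ENNReal.ofReal (gaussianPDFReal μ w x))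
      = fun x => ((Real.toNNReal (gaussianPDFReal μ w x) : NNReal) : ENNReal) from rfl]
  rw [integrable_withDensity_iff_integrable_smul₀
    ((measurable_gaussianPDFReal μ w).real_toNNReal.aemeasurable)]
  constructor <;> intro h <;> refine h.congr (ae_of_all _ fun x => ?_) <;>
    simp [NNReal.smul_def, Real.coe_toNNReal _ (gaussianPDFReal_nonneg μ w x)]

lemma integral_comp_neg_eq (F : ℝ → ℝ) : ∫ x : ℝ, F x = ∫ x : ℝ, F (-x) := by
  conv_lhs => rw [← Measure.map_neg_eq_self (volume : Measure ℝ)]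
  exact integral_map_equiv (MeasurableEquiv.neg ℝ) F

lemma integral_odd_zero (F : ℝ → ℝ) (hF : ∀ x, F (-x) = -F x) : ∫ x : ℝ, F x = 0 := by
  have h := integral_comp_neg_eq F
  simp only [hF, integral_neg] at h
  linarith

lemma integrable_id_gauss (μ : ℝ) (w : NNReal) :
    Integrable (fun x : ℝ => x) (gaussianReal μ w) := by
  by_cases hw : w = 0
  · subst hw
    rw [gaussianReal_zero_var]
    exact (integrable_const μ).congr (ae_eq_dirac (fun x : ℝ => x)).symm
  · rw [gauss_pdf_integrable μ hw]
    have hwpos : (0:ℝ) < (w:ℝ) := by positivity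
    have hb : (0:ℝ) < (2 * (w:ℝ))⁻¹ := by positivity
    have h1 : Integrable (fun y : ℝ =>
        (√(2 * π * (w:ℝ)))⁻¹ * (y * rexp (-(2 * (w:ℝ))⁻¹ * y ^ 2))
          + (√(2 * π * (w:ℝ)))⁻¹ * μ * rexp (-(2 * (w:ℝ))⁻¹ * y ^ 2)) := by
      exact ((integrable_mul_exp_neg_mul_sq hb).const_mul _).add
        ((integrable_exp_neg_mul_sq hb).const_mul _)
    have h2 := h1.comp_sub_right μ
    refine h2.congr (ae_of_all _ fun x => ?_)
    simp only [gaussianPDFReal]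
    rw [show -(x - μ) ^ 2 / (2 * (w:ℝ)) = -(2 * (w:ℝ))⁻¹ * (x - μ) ^ 2 by field_simp]
    ring

lemma integral_id_gauss_zero (w : NNReal) : ∫ x : ℝ, x ∂(gaussianReal 0 w) = 0 := by
  by_cases hw : w = 0
  · subst hw; rw [gaussianReal_zero_var]; simp
  · rw [gauss_pdf_integral 0 hw]
    refine integral_odd_zero _ fun x => ?_
    simp only [gaussianPDFReal]
    rw [show -(-x - 0) ^ 2 = -(x - 0)^2 by ring]
    ring

lemma integral_sq_exp_neg_mul_sq {b : ℝ} (hb : 0 < b) :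
    ∫ x : ℝ, x ^ 2 * rexp (-b * x ^ 2) = √π / (2 * b * √b) := by
  have h1 : ∫ x : ℝ, x ^ 2 * rexp (-b * x ^ 2)
      = 2 * ∫ x in Ioi (0:ℝ), x ^ 2 * rexp (-b * x ^ 2) := by
    rw [← integral_comp_abs (f := fun x => x ^ 2 * rexp (-b * x ^ 2))]
    congr 1; ext x; rw [sq_abs]
  have h2 : ∫ x in Ioi (0:ℝ), x ^ 2 * rexp (-b * x ^ 2)
      = b ^ (-(2+1)/2 : ℝ) * (1/2) * Real.Gamma ((2+1)/2) := by
    rw [← integral_rpow_mul_exp_neg_mul_rpow (by norm_num : (0:ℝ) < 2) (by norm_num : (-1:ℝ) < 2) hb]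
    refine setIntegral_congr_fun measurableSet_Ioi fun x _ => ?_
    rw [show ((2:ℝ)) = ((2:ℕ):ℝ) by norm_num, Real.rpow_natCast]
  have hG : Real.Gamma ((2+1)/2 : ℝ) = √π / 2 := by
    have : ((2+1)/2 : ℝ) = 1/2 + 1 := by norm_num
    rw [this, Real.Gamma_add_one (by norm_num), Real.Gamma_one_half_eq]
    ring
  have hbr : b ^ (-(2+1)/2 : ℝ) = (b * √b)⁻¹ := by
    have h3 : (-(2+1)/2 : ℝ) = -(1 + 1/2) := by norm_num
    rw [h3, Real.rpow_neg hb.le, Real.rpow_add hb, Real.rpow_one,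
      ← Real.sqrt_eq_rpow]
  rw [h1, h2, hG, hbr]
  have hsb : (0:ℝ) < √b := Real.sqrt_pos.mpr hb
  field_simp

lemma integrable_sq_gauss {w : NNReal} (hw : w ≠ 0) :
    Integrable (fun x : ℝ => x ^ 2) (gaussianReal 0 w) := by
  rw [gauss_pdf_integrable 0 hw]
  have ht : (0:ℝ) < (w:ℝ) := by positivity
  have hb : (0:ℝ) < (2 * (w:ℝ))⁻¹ := by positivity
  have h1 : Integrable (fun x : ℝ => x ^ (((2:ℕ):ℝ)) * rexp (-(2 * (w:ℝ))⁻¹ * x ^ 2)) :=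
    integrable_rpow_mul_exp_neg_mul_sq hb (by norm_num)
  have h2 : Integrable (fun x : ℝ => x ^ 2 * rexp (-(2 * (w:ℝ))⁻¹ * x ^ 2)) := by
    refine h1.congr (ae_of_all _ fun x => ?_)
    simp only [Real.rpow_natCast]
  refine ((h2.const_mul (√(2 * π * (w:ℝ)))⁻¹).congr (ae_of_all _ fun x => ?_))
  simp only [gaussianPDFReal, sub_zero]
  rw [show -x ^ 2 / (2 * (w:ℝ)) = -(2 * (w:ℝ))⁻¹ * x ^ 2 by field_simp]
  ring

lemma integral_sq_gauss {w : NNReal} (hw : w ≠ 0) :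
    ∫ x : ℝ, x ^ 2 ∂(gaussianReal 0 w) = (w : ℝ) := by
  rw [gauss_pdf_integral 0 hw]
  have ht : (0:ℝ) < (w:ℝ) := by positivity
  have hb : (0:ℝ) < (2 * (w:ℝ))⁻¹ := by positivity
  have h1 : ∀ x : ℝ, gaussianPDFReal 0 w x * x ^ 2
      = (√(2 * π * (w:ℝ)))⁻¹ * (x ^ 2 * rexp (-(2 * (w:ℝ))⁻¹ * x ^ 2)) := by
    intro x
    simp only [gaussianPDFReal, sub_zero]
    rw [show -x ^ 2 / (2 * (w:ℝ)) = -(2 * (w:ℝ))⁻¹ * x ^ 2 by field_simp]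
    ring
  simp_rw [h1]
  rw [integral_const_mul, integral_sq_exp_neg_mul_sq hb]
  have hsqrt1 : √(2 * π * (w:ℝ)) = √π * √(2 * (w:ℝ)) := by
    rw [show 2 * π * (w:ℝ) = π * (2 * (w:ℝ)) by ring, Real.sqrt_mul pi_pos.le]
  have hsqrt2 : √((2 * (w:ℝ))⁻¹) = (√(2 * (w:ℝ)))⁻¹ := Real.sqrt_inv _
  rw [hsqrt1, hsqrt2]
  have hD : (0:ℝ) < √(2 * (w:ℝ)) := Real.sqrt_pos.mpr (by positivity)
  have hB : (0:ℝ) < √π := Real.sqrt_pos.mpr pi_pos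
  field_simp

end KyleAux

/-- Noise traders' equilibrium expected P&L in the Kyle model with
Gaussian privacy noise. -/
theorem stmt_5 {Ω : Type*} [MeasurableSpace Ω] (P : Measure Ω) [IsProbabilityMeasure P]
    (v u ε : Ω → ℝ) (p₀ σv σu σε : ℝ) (hv : 0 < σv) (hu : 0 < σu) (he : 0 ≤ σε)
    (hvd : P.map v = gaussianReal p₀ ⟨σv ^ 2, by positivity⟩)
    (hud : P.map u = gaussianReal 0 ⟨σu ^ 2, by positivity⟩)
    (hed : P.map ε = gaussianReal 0 ⟨σε ^ 2, by positivity⟩)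
    (hindep : iIndepFun ![v, u, ε] P)
    (β lam : ℝ)
    (hβ : β = Real.sqrt (σu ^ 2 + σε ^ 2) / σv)
    (hlam : lam = σv / (2 * Real.sqrt (σu ^ 2 + σε ^ 2)))
    (x p : Ω → ℝ)
    (hx : ∀ ω, x ω = β * (v ω - p₀))
    (hp : ∀ ω, p ω = p₀ + lam * (x ω + u ω + ε ω)) :
    ∫ ω, (v ω - p ω) * u ω ∂P
      = -(σv * σu ^ 2 / (2 * Real.sqrt (σu ^ 2 + σε ^ 2))) := by
  have hvm : AEMeasurable v P := aemeasurable_of_map_eq_gaussian hvd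
  have hum : AEMeasurable u P := aemeasurable_of_map_eq_gaussian hud
  have hem : AEMeasurable ε P := aemeasurable_of_map_eq_gaussian hed
  have hu2ne : (⟨σu ^ 2, by positivity⟩ : NNReal) ≠ 0 := by
    intro h
    have h2 : σu ^ 2 = 0 := congrArg (fun q : NNReal => (q : ℝ)) h
    nlinarith
  have hsq : AEStronglyMeasurable (fun y : ℝ => y ^ 2) (P.map u) :=
    (measurable_id.pow_const 2).aestronglyMeasurable
  -- integrability of v, u, ε, u²
  have hiv : Integrable v P := by
    have h := (integrable_map_measure (g := fun y : ℝ => y)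
      measurable_id.aestronglyMeasurable hvm).mp
      (by rw [hvd]; exact integrable_id_gauss _ _)
    simpa [Function.comp_def] using h
  have hiu : Integrable u P := by
    have h := (integrable_map_measure (g := fun y : ℝ => y)
      measurable_id.aestronglyMeasurable hum).mp
      (by rw [hud]; exact integrable_id_gauss _ _)
    simpa [Function.comp_def] using h
  have hie : Integrable ε P := by
    have h := (integrable_map_measure (g := fun y : ℝ => y)
      measurable_id.aestronglyMeasurable hem).mp
      (by rw [hed]; exact integrable_id_gauss _ _)
    simpa [Function.comp_def] using h
  have hiu2 : Integrable (fun ω => u ω ^ 2) P := by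
    have h := (integrable_map_measure (g := fun y : ℝ => y ^ 2) hsq hum).mp
      (by rw [hud]; exact integrable_sq_gauss hu2ne)
    simpa [Function.comp_def] using h
  -- means
  have hEu : ∫ ω, u ω ∂P = 0 := by
    have h := integral_map (f := fun y : ℝ => y) hum measurable_id.aestronglyMeasurable
    rw [hud] at h
    rw [← h]; exact integral_id_gauss_zero _
  have hEe : ∫ ω, ε ω ∂P = 0 := by
    have h := integral_map (f := fun y : ℝ => y) hem measurable_id.aestronglyMeasurable
    rw [hed] at h
    rw [← h]; exact integral_id_gauss_zero _
  have hEu2 : ∫ ω, u ω ^ 2 ∂P = σu ^ 2 := by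
    have h := integral_map (f := fun y : ℝ => y ^ 2) hum hsq
    rw [hud, integral_sq_gauss hu2ne] at h
    exact h.symm
  -- independence
  have hvu : IndepFun v u P := hindep.indepFun (i := 0) (j := 1) (by decide)
  have heu : IndepFun ε u P := hindep.indepFun (i := 2) (j := 1) (by decide)
  have hvpu : IndepFun (fun ω => v ω - p₀) u P := by
    have h := hvu.comp (measurable_id.sub_const p₀) measurable_id
    simpa [Function.comp_def] using h
  -- integrability of products
  have hivp : Integrable (fun ω => v ω - p₀) P := hiv.sub (integrable_const p₀)
  have hI1 : Integrable (fun ω => (v ω - p₀) * u ω) P := hvpu.integrable_mul hivp hiu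
  have hI2 : Integrable (fun ω => u ω * u ω) P := by
    refine hiu2.congr (ae_of_all _ fun ω => ?_); ring
  have hI3 : Integrable (fun ω => ε ω * u ω) P := heu.integrable_mul hie hiu
  -- product expectations
  have hE1 : ∫ ω, (v ω - p₀) * u ω ∂P = 0 := by
    have h : ∫ ω, (v ω - p₀) * u ω ∂P = (∫ ω, v ω - p₀ ∂P) * ∫ ω, u ω ∂P :=
      hvpu.integral_fun_mul_eq_mul_integral hivp.aestronglyMeasurable hiu.aestronglyMeasurable
    rw [h, hEu, mul_zero]
  have hE3 : ∫ ω, ε ω * u ω ∂P = 0 := by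
    have h : ∫ ω, ε ω * u ω ∂P = (∫ ω, ε ω ∂P) * ∫ ω, u ω ∂P :=
      heu.integral_fun_mul_eq_mul_integral hie.aestronglyMeasurable hiu.aestronglyMeasurable
    rw [h, hEu, mul_zero]
  have hE2 : ∫ ω, u ω * u ω ∂P = σu ^ 2 := by
    rw [show (fun ω => u ω * u ω) = fun ω => u ω ^ 2 by funext ω; ring, hEu2]
  -- decomposition
  have key : ∀ ω, (v ω - p ω) * u ω
      = (1 - lam * β) * ((v ω - p₀) * u ω) - lam * (u ω * u ω) - lam * (ε ω * u ω) := by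
    intro ω; rw [hp, hx]; ring
  have hf1 : Integrable
      (fun ω => (1 - lam * β) * ((v ω - p₀) * u ω) - lam * (u ω * u ω)) P :=
    (hI1.const_mul _).sub (hI2.const_mul _)
  calc ∫ ω, (v ω - p ω) * u ω ∂P
      = ∫ ω, ((1 - lam * β) * ((v ω - p₀) * u ω) - lam * (u ω * u ω) - lam * (ε ω * u ω)) ∂P :=
        integral_congr_ae (ae_of_all _ key)
    _ = (1 - lam * β) * ∫ ω, (v ω - p₀) * u ω ∂P - lam * ∫ ω, u ω * u ω ∂P
          - lam * ∫ ω, ε ω * u ω ∂P := by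
        rw [integral_sub hf1 (hI3.const_mul lam),
          integral_sub (hI1.const_mul _) (hI2.const_mul _),
          integral_const_mul, integral_const_mul, integral_const_mul]
    _ = -(lam * σu ^ 2) := by rw [hE1, hE2, hE3]; ring
    _ = -(σv * σu ^ 2 / (2 * Real.sqrt (σu ^ 2 + σε ^ 2))) := by rw [hlam]; ring
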